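/- Define for each integer n ≥ 1 the sup-convolution g^n(y,z) := sup_{u ∈ ℝ^d} ( g(y,u) − (n+λ)·‖u − z‖^α ). Then: (a) for all n and all (y,z), g(y,z) ≤ g^{n+1}(y,z) ≤ g^n(y,z), and |g^n(y,z) − g(y,0)| ≤ λ·(f + |y| + ‖z‖^α) (in particular the supremum is finite); (b) for all n, y, z₁, z₂, |g^n(y,z₁) − g^n(y,z₂)| ≤ (n+λ)·‖z₁ − z₂‖^α; (c) if in addition g is continuous on ℝ × ℝ^d with y ↦ g(y,z) continuous uniformly in z, then for any sequences y_n → y and z_n → z one has g^n(y_n, z_n) → g(y,z) as n → ∞. -/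

import Mathlib

open Filter Topology

lemma rpow_subadd {α : ℝ} (h0 : 0 ≤ α) (h1 : α ≤ 1) {x y : ℝ} (hx : 0 ≤ x) (hy : 0 ≤ y) :
    (x + y) ^ α ≤ x ^ α + y ^ α := by
  have h := NNReal.rpow_add_le_add_rpow ⟨x, hx⟩ ⟨y, hy⟩ h0 h1
  have h2 := NNReal.coe_le_coe.2 h
  exact h2

lemma norm_rpow_tri {α : ℝ} (h0 : 0 ≤ α) (h1 : α ≤ 1) {E : Type*} [SeminormedAddGroup E]
    (a b : E) : ‖a‖ ^ α ≤ ‖a - b‖ ^ α + ‖b‖ ^ α := by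
  calc ‖a‖ ^ α ≤ (‖a - b‖ + ‖b‖) ^ α := by
        apply Real.rpow_le_rpow (norm_nonneg _) _ h0
        simpa using norm_add_le (a - b) b
    _ ≤ _ := rpow_subadd h0 h1 (norm_nonneg _) (norm_nonneg _)


/-- The sup-convolution `g^n(y,z) := sup_{u ∈ ℝ^d} ( g(y,u) − (n+λ)·‖u − z‖^α )`. -/
noncomputable def gsup (d : ℕ) (lam α : ℝ) (g : ℝ → EuclideanSpace ℝ (Fin d) → ℝ)
    (n : ℕ) (y : ℝ) (z : EuclideanSpace ℝ (Fin d)) : ℝ :=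
  ⨆ u : EuclideanSpace ℝ (Fin d), (g y u - ((n : ℝ) + lam) * ‖u - z‖ ^ α)

/-- properties of the sup-convolution `g^n`:
(a) `g ≤ g^{n+1} ≤ g^n`, `|g^n(y,z) − g(y,0)| ≤ λ(f+|y|+‖z‖^α)` and the sup is finite;
(b) `|g^n(y,z₁) − g^n(y,z₂)| ≤ (n+λ)‖z₁−z₂‖^α`;
(c) under (H1), `g^n(y_n,z_n) → g(y,z)` whenever `y_n → y` and `z_n → z`. -/
theorem stmt_6 (d : ℕ) (hd : 1 ≤ d) (lam α f : ℝ) (hlam : 0 < lam)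
    (hα : 0 < α ∧ α < 1) (hf : 0 ≤ f)
    (g : ℝ → EuclideanSpace ℝ (Fin d) → ℝ)
    (H4 : ∀ (y : ℝ) (z : EuclideanSpace ℝ (Fin d)),
      |g y z - g y 0| ≤ lam * (f + |y| + ‖z‖ ^ α)) :
    (∀ n : ℕ, 1 ≤ n → ∀ (y : ℝ) (z : EuclideanSpace ℝ (Fin d)),
      BddAbove (Set.range fun u : EuclideanSpace ℝ (Fin d) =>
        g y u - ((n : ℝ) + lam) * ‖u - z‖ ^ α) ∧
      g y z ≤ gsup d lam α g (n + 1) y z ∧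
      gsup d lam α g (n + 1) y z ≤ gsup d lam α g n y z ∧
      |gsup d lam α g n y z - g y 0| ≤ lam * (f + |y| + ‖z‖ ^ α)) ∧
    (∀ n : ℕ, 1 ≤ n → ∀ (y : ℝ) (z₁ z₂ : EuclideanSpace ℝ (Fin d)),
      |gsup d lam α g n y z₁ - gsup d lam α g n y z₂| ≤ ((n : ℝ) + lam) * ‖z₁ - z₂‖ ^ α) ∧
    (Continuous (fun p : ℝ × EuclideanSpace ℝ (Fin d) => g p.1 p.2) →
      (∀ (y₀ : ℝ) (ε : ℝ), 0 < ε → ∃ δ > 0, ∀ y : ℝ, |y - y₀| < δ →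
        ∀ z : EuclideanSpace ℝ (Fin d), |g y z - g y₀ z| ≤ ε) →
      ∀ (yseq : ℕ → ℝ) (zseq : ℕ → EuclideanSpace ℝ (Fin d))
        (y : ℝ) (z : EuclideanSpace ℝ (Fin d)),
        Tendsto yseq atTop (𝓝 y) → Tendsto zseq atTop (𝓝 z) →
        Tendsto (fun n : ℕ => gsup d lam α g n (yseq n) (zseq n)) atTop (𝓝 (g y z))) := by
  obtain ⟨hα0, hα1⟩ := hα
  have hE : True := trivial
  -- key pointwise bound
  have key : ∀ (c : ℝ), 0 ≤ c → ∀ (y : ℝ) (z u : EuclideanSpace ℝ (Fin d)),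
      g y u - (c + lam) * ‖u - z‖ ^ α
        ≤ g y 0 + lam * (f + |y| + ‖z‖ ^ α) - c * ‖u - z‖ ^ α := by
    intro c hc y z u
    have h1 : g y u - g y 0 ≤ lam * (f + |y| + ‖u‖ ^ α) := (abs_le.1 (H4 y u)).2
    have h2 : ‖u‖ ^ α ≤ ‖u - z‖ ^ α + ‖z‖ ^ α := norm_rpow_tri hα0.le hα1.le u z
    have h3 : 0 ≤ ‖u - z‖ ^ α := Real.rpow_nonneg (norm_nonneg _) α
    nlinarith [mul_le_mul_of_nonneg_left h2 hlam.le]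
  have hbdd : ∀ (n : ℕ) (y : ℝ) (z : EuclideanSpace ℝ (Fin d)),
      BddAbove (Set.range fun u : EuclideanSpace ℝ (Fin d) => g y u - ((n : ℝ) + lam) * ‖u - z‖ ^ α) := by
    intro n y z
    refine ⟨g y 0 + lam * (f + |y| + ‖z‖ ^ α), ?_⟩
    rintro _ ⟨u, rfl⟩
    have h := key n n.cast_nonneg y z u
    have h3 : 0 ≤ (n : ℝ) * ‖u - z‖ ^ α :=
      mul_nonneg n.cast_nonneg (Real.rpow_nonneg (norm_nonneg _) α)
    dsimp only
    linarith
  have hge : ∀ (n : ℕ) (y : ℝ) (z : EuclideanSpace ℝ (Fin d)), g y z ≤ gsup d lam α g n y z := by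
    intro n y z
    have h := le_ciSup (hbdd n y z) z
    simpa [gsup, sub_self, Real.zero_rpow hα0.ne'] using h
  have hup : ∀ (n : ℕ) (y : ℝ) (z : EuclideanSpace ℝ (Fin d)),
      gsup d lam α g n y z ≤ g y 0 + lam * (f + |y| + ‖z‖ ^ α) := by
    intro n y z
    apply ciSup_le
    intro u
    have h := key n n.cast_nonneg y z u
    have h3 : 0 ≤ (n : ℝ) * ‖u - z‖ ^ α :=
      mul_nonneg n.cast_nonneg (Real.rpow_nonneg (norm_nonneg _) α)
    linarith
  have hmono : ∀ (n : ℕ) (y : ℝ) (z : EuclideanSpace ℝ (Fin d)),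
      gsup d lam α g (n + 1) y z ≤ gsup d lam α g n y z := by
    intro n y z
    apply ciSup_le
    intro u
    refine le_trans ?_ (le_ciSup (hbdd n y z) u)
    have h3 : 0 ≤ ‖u - z‖ ^ α := Real.rpow_nonneg (norm_nonneg _) α
    have : ((n : ℝ) + lam) * ‖u - z‖ ^ α ≤ (((n + 1 : ℕ) : ℝ) + lam) * ‖u - z‖ ^ α := by
      apply mul_le_mul_of_nonneg_right _ h3
      push_cast; linarith
    linarith
  refine ⟨?_, ?_, ?_⟩
  · intro n _ y z
    refine ⟨hbdd n y z, hge (n + 1) y z, hmono n y z, ?_⟩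
    rw [abs_le]
    constructor
    · have h1 := (abs_le.1 (H4 y z)).1
      have h2 := hge n y z
      linarith
    · have := hup n y z; linarith
  · intro n _ y z₁ z₂
    have hb : ∀ (w₁ w₂ : EuclideanSpace ℝ (Fin d)),
        gsup d lam α g n y w₁ - gsup d lam α g n y w₂ ≤ ((n : ℝ) + lam) * ‖w₁ - w₂‖ ^ α := by
      intro w₁ w₂
      rw [sub_le_iff_le_add]
      apply ciSup_le
      intro u
      have h2 : ‖u - w₂‖ ^ α ≤ ‖u - w₁‖ ^ α + ‖w₁ - w₂‖ ^ α := by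
        have := norm_rpow_tri hα0.le hα1.le (u - w₂) (w₁ - w₂)
        simpa [sub_sub_sub_cancel_right] using this
      have hc : (0 : ℝ) ≤ (n : ℝ) + lam := by positivity
      have h4 := mul_le_mul_of_nonneg_left h2 hc
      have h5 : g y u - ((n : ℝ) + lam) * ‖u - w₂‖ ^ α ≤ gsup d lam α g n y w₂ :=
        le_ciSup (hbdd n y w₂) u
      rw [mul_add] at h4
      linarith
    rw [abs_sub_le_iff]
    refine ⟨hb z₁ z₂, ?_⟩
    have := hb z₂ z₁
    rwa [norm_sub_rev] at this
  · intro hg _ yseq zseq y z hy hz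
    rw [Metric.tendsto_nhds]
    intro ε hε
    have hc : ContinuousAt (fun p : ℝ × EuclideanSpace ℝ (Fin d) => g p.1 p.2) (y, z) := hg.continuousAt
    obtain ⟨δ, hδ, hδ'⟩ := Metric.continuousAt_iff.1 hc (ε / 2) (by positivity)
    -- M sequence
    have hg0 : Tendsto (fun n => g (yseq n) 0) atTop (𝓝 (g y 0)) := by
      have : Tendsto (fun n => ((yseq n, (0 : EuclideanSpace ℝ (Fin d))) : ℝ × EuclideanSpace ℝ (Fin d))) atTop (𝓝 (y, (0 : EuclideanSpace ℝ (Fin d)))) :=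
        hy.prodMk_nhds tendsto_const_nhds
      exact (hg.tendsto (y, (0 : EuclideanSpace ℝ (Fin d)))).comp this
    have habs : Tendsto (fun n => |yseq n|) atTop (𝓝 |y|) := hy.abs
    have hnrm : Tendsto (fun n => ‖zseq n‖ ^ α) atTop (𝓝 (‖z‖ ^ α)) :=
      (hz.norm).rpow_const (Or.inr hα0.le)
    have hM : Tendsto (fun n => g (yseq n) 0 + lam * (f + |yseq n| + ‖zseq n‖ ^ α))
        atTop (𝓝 (g y 0 + lam * (f + |y| + ‖z‖ ^ α))) :=
      hg0.add ((((habs.const_add f).add hnrm).const_mul lam))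
    have hδ2 : (0:ℝ) < (δ / 2) ^ α := Real.rpow_pos_of_pos (by linarith) α
    have hbot : Tendsto (fun n : ℕ => g (yseq n) 0 + lam * (f + |yseq n| + ‖zseq n‖ ^ α)
        - (n : ℝ) * (δ / 2) ^ α) atTop atBot := by
      have hlin : Tendsto (fun n : ℕ => (n : ℝ) * (δ / 2) ^ α) atTop atTop :=
        Tendsto.atTop_mul_const hδ2 tendsto_natCast_atTop_atTop
      have hneg : Tendsto (fun n : ℕ => -((n : ℝ) * (δ / 2) ^ α)) atTop atBot :=
        tendsto_neg_atTop_atBot.comp hlin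
      simpa [sub_eq_add_neg] using hM.add_atBot hneg
    have E1 : ∀ᶠ n in atTop, |yseq n - y| < δ := by
      have := Metric.tendsto_nhds.1 hy δ hδ
      simpa [Real.dist_eq] using this
    have E2 : ∀ᶠ n in atTop, ‖zseq n - z‖ < δ / 2 := by
      have := Metric.tendsto_nhds.1 hz (δ / 2) (by linarith)
      simpa [dist_eq_norm] using this
    have E3 : ∀ᶠ n in atTop, g (yseq n) 0 + lam * (f + |yseq n| + ‖zseq n‖ ^ α)
        - (n : ℝ) * (δ / 2) ^ α ≤ g y z := hbot.eventually_le_atBot _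
    have E4 : ∀ᶠ n in atTop, dist (g (yseq n) (zseq n)) (g y z) < ε / 2 := by
      have ht : Tendsto (fun n => g (yseq n) (zseq n)) atTop (𝓝 (g y z)) :=
        (hg.tendsto (y, z)).comp (hy.prodMk_nhds hz)
      exact Metric.tendsto_nhds.1 ht (ε / 2) (by positivity)
    filter_upwards [E1, E2, E3, E4] with n h1 h2 h3 h4
    have hlow : g y z - ε / 2 < gsup d lam α g n (yseq n) (zseq n) := by
      have := hge n (yseq n) (zseq n)
      rw [Real.dist_eq, abs_lt] at h4
      linarith [h4.1]
    have hupb : gsup d lam α g n (yseq n) (zseq n) ≤ g y z + ε / 2 := by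
      apply ciSup_le
      intro u
      rcases le_or_gt (δ / 2) ‖u - zseq n‖ with hfar | hnear
      · have hk := key n n.cast_nonneg (yseq n) (zseq n) u
        have hmm : (n : ℝ) * (δ / 2) ^ α ≤ (n : ℝ) * ‖u - zseq n‖ ^ α :=
          mul_le_mul_of_nonneg_left
            (Real.rpow_le_rpow (by linarith) hfar hα0.le) n.cast_nonneg
        linarith
      · have hdist : dist ((yseq n, u) : ℝ × EuclideanSpace ℝ (Fin d)) (y, z) < δ := by
          rw [Prod.dist_eq]
          apply max_lt
          · rwa [Real.dist_eq]
          · rw [dist_eq_norm]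
            calc ‖u - z‖ ≤ ‖u - zseq n‖ + ‖zseq n - z‖ := by
                  simpa using norm_add_le (u - zseq n) (zseq n - z)
              _ < δ / 2 + δ / 2 := by linarith
              _ = δ := by ring
        have hgu : dist (g (yseq n) u) (g y z) < ε / 2 := hδ' hdist
        rw [Real.dist_eq, abs_lt] at hgu
        have hnn : 0 ≤ ((n : ℝ) + lam) * ‖u - zseq n‖ ^ α :=
          mul_nonneg (by positivity) (Real.rpow_nonneg (norm_nonneg _) α)
        linarith [hgu.2]
    rw [Real.dist_eq, abs_lt]
    constructor <;> linarith
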